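/- Let n ≥ 1, let φ be a nonzero complex-valued Schwartz function on ℝⁿ whose Fourier transform 𝓕φ is supported in the closed ball {ξ ∈ ℝⁿ : |ξ| ≤ 1/4}, and define f(x) = φ(x) · ∑_{k=1}^∞ k^{-3/2} e^{i k x₁}. Then f ∈ L¹(ℝⁿ) ∩ L²(ℝⁿ) but ∫_{ℝⁿ} |ξ₁|² |𝓕f(ξ)|² dξ = ∞; in particular f does not belong to the Sobolev space H¹(ℝⁿ). -/

import Mathlib

open MeasureTheory Real
open scoped RealInnerProductSpace ENNReal

/-- The Fourier transform with normalization `𝓕g(ξ) = (2π)^{-n/2} ∫ g(x) e^{-ix·ξ} dx`. -/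
noncomputable def fourierTr {n : ℕ} (g : EuclideanSpace ℝ (Fin n) → ℂ)
    (ξ : EuclideanSpace ℝ (Fin n)) : ℂ :=
  (((2 * π) ^ (-(n : ℝ) / 2) : ℝ) : ℂ) *
    ∫ x, g x * Complex.exp (-Complex.I * (⟪x, ξ⟫ : ℝ))

open scoped FourierTransform

lemma summable_a : Summable (fun k : ℕ+ => ((k:ℝ)) ^ (-(3:ℝ)/2)) := by
  have h : Summable (fun k : ℕ => ((k:ℝ)) ^ (-(3:ℝ)/2)) := by
    rw [Real.summable_nat_rpow]; norm_num
  exact h.comp_injective (fun a b h => by exact_mod_cast PNat.coe_injective (by exact_mod_cast h))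

variable {n : ℕ}

lemma fourierTr_eq_fourierIntegral (g : EuclideanSpace ℝ (Fin n) → ℂ)
    (ξ : EuclideanSpace ℝ (Fin n)) :
    fourierTr g ξ = (((2 * π) ^ (-(n : ℝ) / 2) : ℝ) : ℂ) * 𝓕 g ((2 * π)⁻¹ • ξ) := by
  rw [fourierTr, Real.fourier_eq']
  congr 1
  apply integral_congr_ae
  filter_upwards with x
  rw [real_inner_smul_right, smul_eq_mul]
  have hπ : (2 * π) ≠ 0 := by positivity
  rw [mul_comm (g x)]
  congr 1
  · congr 1
    push_cast
    have hπc : (π:ℂ) ≠ 0 := by exact_mod_cast pi_ne_zero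
    field_simp

lemma fourierTr_continuous (φ : SchwartzMap (EuclideanSpace ℝ (Fin n)) ℂ) :
    Continuous (fourierTr ⇑φ) := by
  have h𝓕 : Continuous (𝓕 ⇑φ) := by
    rw [← SchwartzMap.fourier_coe φ]
    exact (SchwartzMap.fourierTransformCLM ℂ φ).continuous
  have : Continuous fun ξ : EuclideanSpace ℝ (Fin n) =>
      (((2 * π) ^ (-(n : ℝ) / 2) : ℝ) : ℂ) * 𝓕 (⇑φ) ((2 * π)⁻¹ • ξ) :=
    continuous_const.mul (h𝓕.comp (continuous_const_smul _))
  exact this.congr (fun ξ => (fourierTr_eq_fourierIntegral ⇑φ ξ).symm)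

lemma fourierTr_ne_zero (φ : SchwartzMap (EuclideanSpace ℝ (Fin n)) ℂ) (hφ0 : φ ≠ 0) :
    ∃ ξ₀, fourierTr ⇑φ ξ₀ ≠ 0 := by
  by_contra h
  push_neg at h
  apply hφ0
  have h𝓕 : ∀ w, 𝓕 ⇑φ w = 0 := by
    intro w
    have := h ((2 * π) • w)
    rw [fourierTr_eq_fourierIntegral] at this
    have hc : (((2 * π) ^ (-(n : ℝ) / 2) : ℝ) : ℂ) ≠ 0 := by
      simp only [ne_eq, Complex.ofReal_eq_zero]
      positivity
    have hs : (2 * π)⁻¹ • ((2 * π) • w) = w := by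
      rw [smul_smul, inv_mul_cancel₀ (by positivity), one_smul]
    rw [hs] at this
    exact (mul_eq_zero.mp this).resolve_left hc
  have : FourierTransform.fourierCLE ℂ (SchwartzMap (EuclideanSpace ℝ (Fin n)) ℂ) φ = 0 := by
    ext x
    simp [FourierTransform.fourierCLE_apply, SchwartzMap.fourier_coe, h𝓕 x]
  have h0 : (FourierTransform.fourierCLE ℂ (SchwartzMap (EuclideanSpace ℝ (Fin n)) ℂ)) φ = (FourierTransform.fourierCLE ℂ (SchwartzMap (EuclideanSpace ℝ (Fin n)) ℂ)) 0 := by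
    simpa using this
  exact (FourierTransform.fourierCLE ℂ (SchwartzMap (EuclideanSpace ℝ (Fin n)) ℂ)).injective h0


noncomputable def gfun (i : Fin n) (x : EuclideanSpace ℝ (Fin n)) : ℂ :=
  ∑' k : ℕ+, (((k : ℝ) ^ (-(3 : ℝ) / 2) : ℝ) : ℂ) * Complex.exp (Complex.I * (k : ℝ) * x i)

lemma norm_term (k : ℕ+) (t : ℝ) :
    ‖(((k : ℝ) ^ (-(3 : ℝ) / 2) : ℝ) : ℂ) * Complex.exp (Complex.I * (k : ℝ) * t)‖
      = (k:ℝ) ^ (-(3:ℝ)/2) := by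
  rw [norm_mul, Complex.norm_real, Complex.norm_exp]
  have h1 : (Complex.I * (k : ℝ) * t).re = 0 := by simp
  have h2 : (0:ℝ) ≤ (k:ℝ) ^ (-(3:ℝ)/2) :=
    Real.rpow_nonneg (by exact_mod_cast Nat.zero_le _) _
  rw [h1]
  simp [abs_of_nonneg h2]

lemma summable_norm_term (t : ℝ) :
    Summable (fun k : ℕ+ => ‖(((k : ℝ) ^ (-(3 : ℝ) / 2) : ℝ) : ℂ) *
      Complex.exp (Complex.I * (k : ℝ) * t)‖) :=
  summable_a.congr (fun k => (norm_term k t).symm)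

lemma gfun_continuous (i : Fin n) : Continuous (gfun i) := by
  apply continuous_tsum (u := fun k : ℕ+ => (k:ℝ) ^ (-(3:ℝ)/2))
  · intro k
    fun_prop
  · exact summable_a
  · intro k x; rw [norm_term]

lemma gfun_bound (i : Fin n) (x : EuclideanSpace ℝ (Fin n)) :
    ‖gfun i x‖ ≤ ∑' k : ℕ+, (k:ℝ) ^ (-(3:ℝ)/2) := by
  calc ‖gfun i x‖ ≤ ∑' k : ℕ+, ‖(((k : ℝ) ^ (-(3 : ℝ) / 2) : ℝ) : ℂ) *
      Complex.exp (Complex.I * (k : ℝ) * x i)‖ :=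
        norm_tsum_le_tsum_norm (summable_norm_term (x i))
    _ = ∑' k : ℕ+, (k:ℝ) ^ (-(3:ℝ)/2) := tsum_congr (fun k => norm_term k (x i))

noncomputable abbrev Sval : ℝ := ∑' k : ℕ+, (k:ℝ) ^ (-(3:ℝ)/2)

lemma part1 (i : Fin n) (φ : SchwartzMap (EuclideanSpace ℝ (Fin n)) ℂ) :
    Integrable (fun x => φ x * gfun i x) volume := by
  apply Integrable.mono' (φ.integrable.norm.const_mul Sval)
  · exact (φ.continuous.mul (gfun_continuous i)).aestronglyMeasurable
  · filter_upwards with x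
    rw [norm_mul]
    exact mul_le_mul_of_nonneg_left (gfun_bound i x) (norm_nonneg _) |>.trans_eq (mul_comm _ _)

lemma part2 (i : Fin n) (φ : SchwartzMap (EuclideanSpace ℝ (Fin n)) ℂ) :
    MemLp (fun x => φ x * gfun i x) 2 volume := by
  have hφ2 : MemLp (fun x => φ x) 2 volume := by
    rw [memLp_two_iff_integrable_sq_norm φ.continuous.aestronglyMeasurable]
    apply Integrable.mono' (φ.integrable.norm.const_mul (SchwartzMap.seminorm ℝ 0 0 φ))
    · exact (φ.continuous.norm.pow 2).aestronglyMeasurable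
    · filter_upwards with x
      rw [Real.norm_eq_abs, abs_of_nonneg (by positivity), sq]
      exact mul_le_mul_of_nonneg_right (SchwartzMap.norm_le_seminorm ℝ φ x) (norm_nonneg _)
  apply MemLp.of_le_mul hφ2 (φ.continuous.mul (gfun_continuous i)).aestronglyMeasurable
  filter_upwards with x
  rw [Pi.mul_apply, norm_mul]
  exact (mul_le_mul_of_nonneg_left (gfun_bound i x) (norm_nonneg _)).trans_eq (mul_comm _ _)


noncomputable def vv (i : Fin n) (k : ℕ+) : EuclideanSpace ℝ (Fin n) :=
  EuclideanSpace.single i ((k : ℝ))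

lemma inner_vv (i : Fin n) (k : ℕ+) (x : EuclideanSpace ℝ (Fin n)) :
    (⟪x, vv i k⟫ : ℝ) = (k : ℝ) * x i := by
  rw [vv, EuclideanSpace.inner_single_right]
  simp

lemma cont_kernel (w : EuclideanSpace ℝ (Fin n)) :
    Continuous fun x : EuclideanSpace ℝ (Fin n) =>
      Complex.exp (-Complex.I * ((⟪x, w⟫ : ℝ) : ℂ)) := by
  have h : Continuous fun x : EuclideanSpace ℝ (Fin n) => (⟪x, w⟫ : ℝ) :=
    continuous_id.inner continuous_const
  exact Complex.continuous_exp.comp (continuous_const.mul (Complex.continuous_ofReal.comp h))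

lemma key_pointwise (i : Fin n) (φ : SchwartzMap (EuclideanSpace ℝ (Fin n)) ℂ)
    (ξ x : EuclideanSpace ℝ (Fin n)) :
    (φ x * gfun i x) * Complex.exp (-Complex.I * ((⟪x, ξ⟫ : ℝ) : ℂ))
      = ∑' k : ℕ+, (((k : ℝ) ^ (-(3 : ℝ) / 2) : ℝ) : ℂ) *
          (φ x * Complex.exp (-Complex.I * ((⟪x, ξ - vv i k⟫ : ℝ) : ℂ))) := by
  rw [gfun]
  rw [show (φ x * ∑' k : ℕ+, (((k : ℝ) ^ (-(3 : ℝ) / 2) : ℝ) : ℂ) *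
        Complex.exp (Complex.I * (k : ℝ) * x i)) * Complex.exp (-Complex.I * ((⟪x, ξ⟫ : ℝ) : ℂ))
      = (∑' k : ℕ+, (((k : ℝ) ^ (-(3 : ℝ) / 2) : ℝ) : ℂ) *
        Complex.exp (Complex.I * (k : ℝ) * x i)) *
          (φ x * Complex.exp (-Complex.I * ((⟪x, ξ⟫ : ℝ) : ℂ))) by ring]
  rw [← tsum_mul_right]
  apply tsum_congr
  intro k
  have hinner : (⟪x, ξ - vv i k⟫ : ℝ) = (⟪x, ξ⟫ : ℝ) - (k : ℝ) * x i := by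
    rw [inner_sub_right, inner_vv]
  rw [hinner]
  rw [show -Complex.I * (((⟪x, ξ⟫ : ℝ) - (k : ℝ) * x i : ℝ) : ℂ)
      = Complex.I * (k : ℝ) * (x i) + -Complex.I * ((⟪x, ξ⟫ : ℝ) : ℂ) by push_cast; ring]
  rw [Complex.exp_add]
  ring

lemma norm_exp_kernel (z : ℂ) (r : ℝ) : ‖z * Complex.exp (-Complex.I * (r : ℂ))‖ = ‖z‖ := by
  rw [norm_mul, Complex.norm_exp]
  have : (-Complex.I * (r:ℂ)).re = 0 := by simp
  rw [this]
  simp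

lemma F_eq (i : Fin n) (φ : SchwartzMap (EuclideanSpace ℝ (Fin n)) ℂ)
    (ξ : EuclideanSpace ℝ (Fin n)) :
    fourierTr (fun x => φ x * gfun i x) ξ
      = ∑' k : ℕ+, (((k : ℝ) ^ (-(3 : ℝ) / 2) : ℝ) : ℂ) * fourierTr ⇑φ (ξ - vv i k) := by
  have hmeas : ∀ k : ℕ+, AEStronglyMeasurable (fun x : EuclideanSpace ℝ (Fin n) =>
      (((k : ℝ) ^ (-(3 : ℝ) / 2) : ℝ) : ℂ) *
        (φ x * Complex.exp (-Complex.I * ((⟪x, ξ - vv i k⟫ : ℝ) : ℂ)))) volume := by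
    intro k
    exact (continuous_const.mul (φ.continuous.mul (cont_kernel _))).aestronglyMeasurable
  have hnorm : ∀ (k : ℕ+) (x : EuclideanSpace ℝ (Fin n)),
      ((‖(((k : ℝ) ^ (-(3 : ℝ) / 2) : ℝ) : ℂ) *
        (φ x * Complex.exp (-Complex.I * ((⟪x, ξ - vv i k⟫ : ℝ) : ℂ)))‖₊ : ℝ≥0∞))
      = ENNReal.ofReal ((k:ℝ) ^ (-(3:ℝ)/2)) * (‖φ x‖₊ : ℝ≥0∞) := by
    intro k x
    rw [← enorm_eq_nnnorm, ← enorm_eq_nnnorm, ← ofReal_norm, ← ofReal_norm, norm_mul,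
      norm_exp_kernel (φ x), Complex.norm_real, Real.norm_eq_abs,
      abs_of_nonneg (Real.rpow_nonneg (by exact_mod_cast Nat.zero_le _) _),
      ENNReal.ofReal_mul (Real.rpow_nonneg (by exact_mod_cast Nat.zero_le _) _)]
  have hfin : ∑' k : ℕ+, ∫⁻ x, ‖(((k : ℝ) ^ (-(3 : ℝ) / 2) : ℝ) : ℂ) *
      (φ x * Complex.exp (-Complex.I * ((⟪x, ξ - vv i k⟫ : ℝ) : ℂ)))‖₊ ∂volume ≠ ⊤ := by
    have hφfin : ∫⁻ x, (‖φ x‖₊ : ℝ≥0∞) ∂volume ≠ ⊤ := φ.integrable.hasFiniteIntegral.ne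
    calc ∑' k : ℕ+, ∫⁻ x, ‖(((k : ℝ) ^ (-(3 : ℝ) / 2) : ℝ) : ℂ) *
          (φ x * Complex.exp (-Complex.I * ((⟪x, ξ - vv i k⟫ : ℝ) : ℂ)))‖₊ ∂volume
        = ∑' k : ℕ+, ENNReal.ofReal ((k:ℝ) ^ (-(3:ℝ)/2)) * ∫⁻ x, (‖φ x‖₊ : ℝ≥0∞) ∂volume := by
          apply tsum_congr
          intro k
          rw [← lintegral_const_mul' _ _ ENNReal.ofReal_ne_top]
          exact lintegral_congr (fun x => hnorm k x)
      _ = (∑' k : ℕ+, ENNReal.ofReal ((k:ℝ) ^ (-(3:ℝ)/2))) * ∫⁻ x, (‖φ x‖₊ : ℝ≥0∞) ∂volume :=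
          ENNReal.tsum_mul_right
      _ ≠ ⊤ := by
          apply ENNReal.mul_ne_top _ hφfin
          rw [← ENNReal.ofReal_tsum_of_nonneg
            (fun k => Real.rpow_nonneg (by exact_mod_cast Nat.zero_le _) _) summable_a]
          exact ENNReal.ofReal_ne_top
  rw [fourierTr]
  rw [integral_congr_ae (ae_of_all _ (key_pointwise i φ ξ))]
  rw [integral_tsum hmeas hfin]
  rw [← tsum_mul_left]
  apply tsum_congr
  intro k
  rw [MeasureTheory.integral_const_mul, fourierTr]
  ring

lemma vv_sub (i : Fin n) (k j : ℕ+) :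
    vv i k - vv i j = EuclideanSpace.single i ((k:ℝ) - (j:ℝ)) := by
  ext l
  simp only [vv]
  by_cases h : l = i <;> simp [EuclideanSpace.single_apply, h, PiLp.sub_apply]

lemma norm_vv_sub (i : Fin n) (k j : ℕ+) : ‖vv i k - vv i j‖ = |(k:ℝ) - (j:ℝ)| := by
  rw [vv_sub, EuclideanSpace.norm_single, Real.norm_eq_abs]

lemma supp_vanish (φ : SchwartzMap (EuclideanSpace ℝ (Fin n)) ℂ)
    (hsupp : Function.support (fourierTr (⇑φ)) ⊆ Metric.closedBall 0 (1 / 4))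
    (y : EuclideanSpace ℝ (Fin n)) (hy : 1/4 < ‖y‖) : fourierTr ⇑φ y = 0 := by
  by_contra h
  have := hsupp (Function.mem_support.mpr h)
  rw [Metric.mem_closedBall, dist_zero_right] at this
  linarith

lemma F_on_ball (i : Fin n) (φ : SchwartzMap (EuclideanSpace ℝ (Fin n)) ℂ)
    (hsupp : Function.support (fourierTr (⇑φ)) ⊆ Metric.closedBall 0 (1 / 4))
    (k : ℕ+) (ξ : EuclideanSpace ℝ (Fin n)) (hξ : ξ ∈ Metric.closedBall (vv i k) (1/4)) :
    fourierTr (fun x => φ x * gfun i x) ξ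
      = (((k : ℝ) ^ (-(3 : ℝ) / 2) : ℝ) : ℂ) * fourierTr ⇑φ (ξ - vv i k) := by
  rw [F_eq]
  apply tsum_eq_single
  intro j hj
  have hjk : (1:ℝ) ≤ |(k:ℝ) - (j:ℝ)| := by
    have : (j:ℕ) ≠ (k:ℕ) := by exact_mod_cast fun h => hj (PNat.coe_injective h)
    have h1 : ((k:ℕ):ℤ) ≠ ((j:ℕ):ℤ) := by exact_mod_cast this.symm
    have h2 : (1:ℤ) ≤ |((k:ℕ):ℤ) - ((j:ℕ):ℤ)| := by
      rcases lt_or_gt_of_ne h1 with h | h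
      · rw [abs_of_neg (by omega)]; omega
      · rw [abs_of_pos (by omega)]; omega
    have h3 : ((1:ℤ):ℝ) ≤ (|((k:ℕ):ℤ) - ((j:ℕ):ℤ)| : ℝ) := by exact_mod_cast h2
    push_cast at h3
    convert h3 using 2
  have hdist : 1/4 < ‖ξ - vv i j‖ := by
    rw [Metric.mem_closedBall, dist_eq_norm] at hξ
    have h2 : ‖vv i k - vv i j‖ ≤ ‖ξ - vv i j‖ + ‖ξ - vv i k‖ := by
      have := norm_sub_le_norm_sub_add_norm_sub (vv i k) ξ (vv i j)
      calc ‖vv i k - vv i j‖ ≤ ‖vv i k - ξ‖ + ‖ξ - vv i j‖ := norm_sub_le_norm_sub_add_norm_sub _ _ _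
        _ = ‖ξ - vv i j‖ + ‖ξ - vv i k‖ := by rw [norm_sub_rev (vv i k) ξ]; ring
    rw [norm_vv_sub] at h2
    linarith
  rw [supp_vanish φ hsupp _ hdist, mul_zero]

lemma coord_le_norm (x : EuclideanSpace ℝ (Fin n)) (i : Fin n) : |x i| ≤ ‖x‖ := by
  have := abs_real_inner_le_norm (EuclideanSpace.single i (1:ℝ)) x
  simpa [EuclideanSpace.inner_single_left] using this

lemma not_summable_quarter : ¬ Summable (fun k : ℕ+ => (1 : ℝ)/(4 * k)) := by
  intro h
  have h2 : Summable (fun n : ℕ => (1:ℝ)/(4 * (n+1))) := by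
    have := h.comp_injective (fun a b hab => by
      simpa [PNat.coe_inj] using hab : Function.Injective (fun n : ℕ => (n.succPNat)))
    apply this.congr
    intro n
    simp [Function.comp, Nat.succPNat]
  have h3 : Summable (fun n : ℕ => (1:ℝ)/((n:ℝ)+1)) := by
    have := h2.mul_left 4
    apply this.congr
    intro n; field_simp
  have h4 : Summable (fun n : ℕ => (1:ℝ)/(n:ℝ)) := by
    rw [← summable_nat_add_iff 1]
    push_cast
    exact h3
  exact Real.not_summable_one_div_natCast h4

lemma tsum_quarter_top : ∑' k : ℕ+, ENNReal.ofReal ((1 : ℝ)/(4 * k)) = ⊤ := by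
  by_contra h
  apply not_summable_quarter
  have hs := ENNReal.summable_toReal h
  apply hs.congr
  intro k
  rw [ENNReal.toReal_ofReal (by positivity)]

lemma ak_sq (k : ℕ+) : (((k:ℝ)) ^ (-(3:ℝ)/2))^2 = (((k:ℝ))^(3:ℕ))⁻¹ := by
  have hk : (0:ℝ) ≤ (k:ℝ) := by exact_mod_cast Nat.zero_le _
  rw [← Real.rpow_natCast ((k:ℝ) ^ (-(3:ℝ)/2)) 2, ← Real.rpow_mul hk]
  rw [show (-(3:ℝ)/2 * (2:ℕ)) = -(3:ℕ) by push_cast; ring]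
  rw [Real.rpow_neg hk, Real.rpow_natCast]

lemma key_ineq (k : ℕ+) :
    (1:ℝ)/(4*k) ≤ ((k:ℝ) - 1/4)^2 * (((k:ℝ)) ^ (-(3:ℝ)/2))^2 := by
  have hk : (1:ℝ) ≤ (k:ℝ) := by exact_mod_cast k.one_le
  rw [ak_sq, ← div_eq_mul_inv, div_le_div_iff₀ (by positivity) (by positivity)]
  nlinarith [sq_nonneg ((k:ℝ) - 1/2), sq_nonneg ((k:ℝ) - 1)]

lemma I0_pos (φ : SchwartzMap (EuclideanSpace ℝ (Fin n)) ℂ) (hφ0 : φ ≠ 0) :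
    0 < ∫⁻ y, ENNReal.ofReal (‖fourierTr ⇑φ y‖^2) := by
  obtain ⟨ξ₀, h0⟩ := fourierTr_ne_zero φ hφ0
  set c := ‖fourierTr ⇑φ ξ₀‖^2 with hc
  have hcpos : 0 < c := pow_pos (norm_pos_iff.mpr h0) 2
  have hcont : Continuous fun y : EuclideanSpace ℝ (Fin n) => ‖fourierTr ⇑φ y‖^2 :=
    ((fourierTr_continuous φ).norm.pow 2)
  have hopen : IsOpen {y : EuclideanSpace ℝ (Fin n) | c/2 < ‖fourierTr ⇑φ y‖^2} :=
    isOpen_lt continuous_const hcont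
  have hmem : ξ₀ ∈ {y : EuclideanSpace ℝ (Fin n) | c/2 < ‖fourierTr ⇑φ y‖^2} := by
    simp only [Set.mem_setOf_eq, ← hc]
    linarith
  obtain ⟨ε, hε, hball⟩ := Metric.isOpen_iff.mp hopen ξ₀ hmem
  have hlow : ENNReal.ofReal (c/2) * volume (Metric.ball ξ₀ ε)
      ≤ ∫⁻ y, ENNReal.ofReal (‖fourierTr ⇑φ y‖^2) := by
    calc ENNReal.ofReal (c/2) * volume (Metric.ball ξ₀ ε)
        = ∫⁻ _ in Metric.ball ξ₀ ε, ENNReal.ofReal (c/2) := (setLIntegral_const _ _).symm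
      _ ≤ ∫⁻ y in Metric.ball ξ₀ ε, ENNReal.ofReal (‖fourierTr ⇑φ y‖^2) := by
          apply setLIntegral_mono' measurableSet_ball
          intro y hy
          exact ENNReal.ofReal_le_ofReal (hball hy).le
      _ ≤ ∫⁻ y, ENNReal.ofReal (‖fourierTr ⇑φ y‖^2) := setLIntegral_le_lintegral _ _
  refine lt_of_lt_of_le ?_ hlow
  apply ENNReal.mul_pos
  · simp [ENNReal.ofReal_pos.mpr (by linarith : (0:ℝ) < c/2)]
    linarith
  · exact (Metric.measure_ball_pos volume ξ₀ hε).ne'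

lemma main_div (i : Fin n) (φ : SchwartzMap (EuclideanSpace ℝ (Fin n)) ℂ) (hφ0 : φ ≠ 0)
    (hsupp : Function.support (fourierTr (⇑φ)) ⊆ Metric.closedBall 0 (1 / 4)) :
    ∫⁻ ξ, ENNReal.ofReal ((ξ i)^2 * ‖fourierTr (fun x => φ x * gfun i x) ξ‖^2) = ⊤ := by
  set Φ : EuclideanSpace ℝ (Fin n) → ℂ := fourierTr ⇑φ with hΦ
  set I₀ : ℝ≥0∞ := ∫⁻ y, ENNReal.ofReal (‖Φ y‖^2) with hI₀
  set W : EuclideanSpace ℝ (Fin n) → ℝ≥0∞ := fun ξ =>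
    ENNReal.ofReal ((ξ i)^2 * ‖fourierTr (fun x => φ x * gfun i x) ξ‖^2) with hW
  set B : ℕ+ → Set (EuclideanSpace ℝ (Fin n)) := fun k => Metric.closedBall (vv i k) (1/4)
    with hB
  have hak : ∀ k : ℕ+, (0:ℝ) ≤ (k:ℝ) ^ (-(3:ℝ)/2) :=
    fun k => Real.rpow_nonneg (by exact_mod_cast Nat.zero_le _) _
  have claim : ∀ k : ℕ+, ENNReal.ofReal ((1:ℝ)/(4*k)) * I₀ ≤ ∫⁻ ξ in B k, W ξ := by
    intro k
    have hk1 : (1:ℝ) ≤ (k:ℝ) := by exact_mod_cast k.one_le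
    have step1 : ∫⁻ ξ in B k, ENNReal.ofReal ((((k:ℝ)-1/4)^2 * ((k:ℝ) ^ (-(3:ℝ)/2))^2)
        * ‖Φ (ξ - vv i k)‖^2) ≤ ∫⁻ ξ in B k, W ξ := by
      apply setLIntegral_mono' Metric.isClosed_closedBall.measurableSet
      intro ξ hξ
      apply ENNReal.ofReal_le_ofReal
      have hF := F_on_ball i φ hsupp k ξ hξ
      rw [hF, norm_mul, Complex.norm_real, Real.norm_eq_abs, abs_of_nonneg (hak k), mul_pow]
      have hcoord : |ξ i - (k:ℝ)| ≤ 1/4 := by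
        have h1 : (ξ - vv i k) i = ξ i - (k:ℝ) := by
          simp [vv, PiLp.sub_apply, EuclideanSpace.single_apply]
        have h2 := coord_le_norm (ξ - vv i k) i
        rw [h1] at h2
        rw [Metric.mem_closedBall, dist_eq_norm] at hξ
        linarith
      have hxi : (k:ℝ) - 1/4 ≤ ξ i := by
        rcases abs_le.mp hcoord with ⟨h1, h2⟩
        linarith
      have hsq : ((k:ℝ)-1/4)^2 ≤ (ξ i)^2 := by
        apply pow_le_pow_left₀ (by linarith) hxi
      rw [mul_assoc]
      exact mul_le_mul_of_nonneg_right hsq (by positivity)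
    have step2 : ∫⁻ ξ in B k, ENNReal.ofReal ((((k:ℝ)-1/4)^2 * ((k:ℝ) ^ (-(3:ℝ)/2))^2)
        * ‖Φ (ξ - vv i k)‖^2)
        = ENNReal.ofReal (((k:ℝ)-1/4)^2 * ((k:ℝ) ^ (-(3:ℝ)/2))^2) * I₀ := by
      have hpt : ∀ ξ, ENNReal.ofReal ((((k:ℝ)-1/4)^2 * ((k:ℝ) ^ (-(3:ℝ)/2))^2)
          * ‖Φ (ξ - vv i k)‖^2)
          = ENNReal.ofReal (((k:ℝ)-1/4)^2 * ((k:ℝ) ^ (-(3:ℝ)/2))^2)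
            * ENNReal.ofReal (‖Φ (ξ - vv i k)‖^2) := by
        intro ξ
        rw [ENNReal.ofReal_mul (by positivity)]
      simp only [hpt]
      rw [lintegral_const_mul' _ _ ENNReal.ofReal_ne_top]
      congr 1
      have hsub : (Function.support fun ξ => ENNReal.ofReal (‖Φ (ξ - vv i k)‖^2)) ⊆ B k := by
        intro ξ hξ
        by_contra hξB
        apply hξ
        have : 1/4 < ‖ξ - vv i k‖ := by
          rw [hB] at hξB
          simp only [Metric.mem_closedBall, dist_eq_norm, not_le] at hξB
          exact hξB
        show ENNReal.ofReal (‖Φ (ξ - vv i k)‖^2) = 0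
        rw [hΦ, supp_vanish φ hsupp _ this]
        simp
      rw [setLIntegral_eq_of_support_subset hsub, hI₀]
      exact lintegral_sub_right_eq_self (fun y => ENNReal.ofReal (‖Φ y‖^2)) (vv i k)
    calc ENNReal.ofReal ((1:ℝ)/(4*k)) * I₀
        ≤ ENNReal.ofReal (((k:ℝ)-1/4)^2 * ((k:ℝ) ^ (-(3:ℝ)/2))^2) * I₀ :=
          mul_le_mul_left (ENNReal.ofReal_le_ofReal (key_ineq k)) I₀
      _ = _ := step2.symm
      _ ≤ _ := step1
  have hdisj : Pairwise (Function.onFun Disjoint B) := by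
    intro j k hjk
    apply Metric.closedBall_disjoint_closedBall
    rw [dist_eq_norm, norm_vv_sub]
    have : (j:ℕ) ≠ (k:ℕ) := fun h => hjk (PNat.coe_injective h)
    have h1 : ((j:ℕ):ℤ) ≠ ((k:ℕ):ℤ) := by exact_mod_cast this
    have h2 : (1:ℤ) ≤ |((j:ℕ):ℤ) - ((k:ℕ):ℤ)| := by
      rcases lt_or_gt_of_ne h1 with h | h
      · rw [abs_of_neg (by omega)]; omega
      · rw [abs_of_pos (by omega)]; omega
    have h3 : ((1:ℤ):ℝ) ≤ (|((j:ℕ):ℤ) - ((k:ℕ):ℤ)| : ℝ) := by exact_mod_cast h2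
    push_cast at h3
    norm_num
    linarith
  have htop : (⊤ : ℝ≥0∞) ≤ ∫⁻ ξ, W ξ := by
    calc (⊤ : ℝ≥0∞) = (∑' k : ℕ+, ENNReal.ofReal ((1:ℝ)/(4*k))) * I₀ := by
          rw [tsum_quarter_top, ENNReal.top_mul (I0_pos φ hφ0).ne']
      _ = ∑' k : ℕ+, ENNReal.ofReal ((1:ℝ)/(4*k)) * I₀ := ENNReal.tsum_mul_right.symm
      _ ≤ ∑' k : ℕ+, ∫⁻ ξ in B k, W ξ := ENNReal.tsum_le_tsum claim
      _ = ∫⁻ ξ in ⋃ k, B k, W ξ :=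
          (lintegral_iUnion (fun k => Metric.isClosed_closedBall.measurableSet) hdisj W).symm
      _ ≤ ∫⁻ ξ, W ξ := setLIntegral_le_lintegral _ _
  exact top_le_iff.mp htop

/-- For nonzero Schwartz `φ` with `𝓕φ` supported in `{|ξ| ≤ 1/4}` and
`f(x) = φ(x) ∑_{k=1}^∞ k^{-3/2} e^{ikx₁}`, the function `f` is in `L¹ ∩ L²` but
`∫ |ξ₁|²|𝓕f(ξ)|² dξ = ∞`; in particular `∫ (1+|ξ|²)|𝓕f(ξ)|² dξ = ∞`, so `f ∉ H¹(ℝⁿ)`. -/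
theorem witness_not_in_H1 (n : ℕ) (hn : 1 ≤ n)
    (φ : SchwartzMap (EuclideanSpace ℝ (Fin n)) ℂ) (hφ0 : φ ≠ 0)
    (hsupp : Function.support (fourierTr (⇑φ)) ⊆ Metric.closedBall 0 (1 / 4)) :
    Integrable
        (fun x : EuclideanSpace ℝ (Fin n) =>
          φ x * ∑' k : ℕ+, (((k : ℝ) ^ (-(3 : ℝ) / 2) : ℝ) : ℂ) *
            Complex.exp (Complex.I * (k : ℝ) * x ⟨0, hn⟩)) volume ∧
      MemLp
        (fun x : EuclideanSpace ℝ (Fin n) =>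
          φ x * ∑' k : ℕ+, (((k : ℝ) ^ (-(3 : ℝ) / 2) : ℝ) : ℂ) *
            Complex.exp (Complex.I * (k : ℝ) * x ⟨0, hn⟩)) 2 volume ∧
      (∫⁻ ξ : EuclideanSpace ℝ (Fin n),
          ENNReal.ofReal ((ξ ⟨0, hn⟩) ^ 2 *
            ‖fourierTr
              (fun x => φ x * ∑' k : ℕ+, (((k : ℝ) ^ (-(3 : ℝ) / 2) : ℝ) : ℂ) *
                Complex.exp (Complex.I * (k : ℝ) * x ⟨0, hn⟩)) ξ‖ ^ 2)) = ⊤ ∧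
      (∫⁻ ξ : EuclideanSpace ℝ (Fin n),
          ENNReal.ofReal ((1 + ‖ξ‖ ^ 2) *
            ‖fourierTr
              (fun x => φ x * ∑' k : ℕ+, (((k : ℝ) ^ (-(3 : ℝ) / 2) : ℝ) : ℂ) *
                Complex.exp (Complex.I * (k : ℝ) * x ⟨0, hn⟩)) ξ‖ ^ 2)) = ⊤ := by
  have h3 := main_div (⟨0, hn⟩ : Fin n) φ hφ0 hsupp
  refine ⟨part1 _ φ, part2 _ φ, h3, ?_⟩
  rw [eq_top_iff, ← h3]
  apply lintegral_mono
  intro ξ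
  apply ENNReal.ofReal_le_ofReal
  apply mul_le_mul_of_nonneg_right _ (by positivity)
  have h4 : (ξ (⟨0, hn⟩ : Fin n))^2 ≤ ‖ξ‖^2 := by
    rw [← sq_abs]
    exact pow_le_pow_left₀ (abs_nonneg _) (coord_le_norm ξ _) 2
  have h5 : ‖ξ‖^2 ≤ 1 + ‖ξ‖^2 := by linarith
  exact h4.trans h5
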